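/- Let S ≥ 1 and m ≥ 1 be natural numbers and μ̄ > 0. Let y : Fin S → Fin m → ℝ satisfy y i j ∈ {0,1} for all i, j and ∑_i y i j ≥ 1 for every class j, and let h, ĥ : Fin S → Fin m → ℝ satisfy 0 ≤ h i j ≤ 1 and 0 ≤ ĥ i j ≤ 1 for all i, j, and ∑_j |h i j − ĥ i j| ≤ μ̄/S for every i. Then |l_Q(h, y) − l_Q(ĥ, y)| ≤ μ̄. -/

import Mathlib

/-- The Q-mean loss for a batch of `S` samples with `m` classes, per-class
prediction probabilities `h` and one-hot true labels `y`. -/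
noncomputable def lQ {S m : ℕ} (h y : Fin S → Fin m → ℝ) : ℝ :=
  Real.sqrt ((1 / (m : ℝ)) *
    ∑ j, (1 - (∑ i, y i j * h i j) / (∑ i, y i j)) ^ 2)

theorem lQ_lipschitz (S m : ℕ) (hS : 1 ≤ S) (hm : 1 ≤ m) (μbar : ℝ) (hμ : 0 < μbar)
    (y h hhat : Fin S → Fin m → ℝ)
    (hy : ∀ i j, y i j = 0 ∨ y i j = 1)
    (hy1 : ∀ j, 1 ≤ ∑ i, y i j)
    (hb : ∀ i j, 0 ≤ h i j ∧ h i j ≤ 1)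
    (hbhat : ∀ i j, 0 ≤ hhat i j ∧ hhat i j ≤ 1)
    (hclose : ∀ i, ∑ j, |h i j - hhat i j| ≤ μbar / (S : ℝ)) :
    |lQ h y - lQ hhat y| ≤ μbar := by
  set A : Fin m → ℝ := fun j => (∑ i, y i j * h i j) / (∑ i, y i j) with hA
  set B : Fin m → ℝ := fun j => (∑ i, y i j * hhat i j) / (∑ i, y i j) with hB
  set d : Fin m → ℝ := fun j => ∑ i, |h i j - hhat i j| with hd
  have hd0 : ∀ j, 0 ≤ d j := fun j => Finset.sum_nonneg fun i _ => abs_nonneg _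
  -- key pointwise bound
  have hkey : ∀ j, |A j - B j| ≤ d j := by
    intro j
    have hY : (1 : ℝ) ≤ ∑ i, y i j := hy1 j
    have hYpos : (0 : ℝ) < ∑ i, y i j := lt_of_lt_of_le one_pos hY
    have h1 : A j - B j = (∑ i, y i j * (h i j - hhat i j)) / (∑ i, y i j) := by
      simp only [hA, hB]
      rw [div_sub_div_same, ← Finset.sum_sub_distrib]
      congr 1
      exact Finset.sum_congr rfl fun i _ => by ring
    rw [h1, abs_div, abs_of_pos hYpos]
    have h2 : |∑ i, y i j * (h i j - hhat i j)| ≤ d j := by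
      refine (Finset.abs_sum_le_sum_abs _ _).trans ?_
      apply Finset.sum_le_sum
      intro i _
      rw [abs_mul]
      rcases hy i j with h0 | h0 <;> simp [h0]
    calc |∑ i, y i j * (h i j - hhat i j)| / (∑ i, y i j)
        ≤ |∑ i, y i j * (h i j - hhat i j)| / 1 :=
          div_le_div_of_nonneg_left (abs_nonneg _) one_pos hY
      _ = |∑ i, y i j * (h i j - hhat i j)| := by rw [div_one]
      _ ≤ d j := h2
  -- total bound on d
  have hsumd : ∑ j, d j ≤ μbar := by
    have : ∑ j, d j = ∑ i, ∑ j, |h i j - hhat i j| := Finset.sum_comm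
    rw [this]
    calc ∑ i : Fin S, ∑ j, |h i j - hhat i j|
        ≤ ∑ i : Fin S, μbar / (S : ℝ) := Finset.sum_le_sum fun i _ => hclose i
      _ = (S : ℝ) * (μbar / (S : ℝ)) := by simp [Finset.sum_const, mul_comm]
      _ = μbar := by
          field_simp
  -- Euclidean vectors
  set u : EuclideanSpace ℝ (Fin m) := WithLp.toLp 2 (fun j => 1 - A j) with hu
  set v : EuclideanSpace ℝ (Fin m) := WithLp.toLp 2 (fun j => 1 - B j) with hv
  have hmpos : (0 : ℝ) < m := by exact_mod_cast Nat.lt_of_lt_of_le Nat.zero_lt_one hm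
  have hc : (0 : ℝ) ≤ 1 / (m : ℝ) := by positivity
  have hnormu : lQ h y = Real.sqrt (1 / (m : ℝ)) * ‖u‖ := by
    rw [EuclideanSpace.norm_eq, ← Real.sqrt_mul hc]
    simp [lQ, hu, hA, Real.norm_eq_abs, sq_abs]
  have hnormv : lQ hhat y = Real.sqrt (1 / (m : ℝ)) * ‖v‖ := by
    rw [EuclideanSpace.norm_eq, ← Real.sqrt_mul hc]
    simp [lQ, hv, hB, Real.norm_eq_abs, sq_abs]
  have htri : |‖u‖ - ‖v‖| ≤ ‖u - v‖ := abs_norm_sub_norm_le u v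
  have hdiff : ‖u - v‖ = Real.sqrt (∑ j, (A j - B j) ^ 2) := by
    rw [EuclideanSpace.norm_eq]
    congr 1
    apply Finset.sum_congr rfl
    intro j _
    have : (u - v) j = B j - A j := by simp [hu, hv]
    rw [this, Real.norm_eq_abs, sq_abs]
    ring
  have hsq : ∑ j, (A j - B j) ^ 2 ≤ μbar ^ 2 := by
    calc ∑ j, (A j - B j) ^ 2 ≤ ∑ j, d j ^ 2 := by
          apply Finset.sum_le_sum
          intro j _
          rw [← sq_abs (A j - B j)]
          exact pow_le_pow_left₀ (abs_nonneg _) (hkey j) 2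
      _ ≤ (∑ j, d j) ^ 2 := by
          exact Finset.sum_sq_le_sq_sum_of_nonneg fun j _ => hd0 j
      _ ≤ μbar ^ 2 := pow_le_pow_left₀ (Finset.sum_nonneg fun j _ => hd0 j) hsumd 2
  calc |lQ h y - lQ hhat y|
      = Real.sqrt (1 / (m : ℝ)) * |‖u‖ - ‖v‖| := by
        rw [hnormu, hnormv, ← mul_sub, abs_mul, abs_of_nonneg (Real.sqrt_nonneg _)]
    _ ≤ Real.sqrt (1 / (m : ℝ)) * ‖u - v‖ :=
        mul_le_mul_of_nonneg_left htri (Real.sqrt_nonneg _)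
    _ = Real.sqrt ((1 / (m : ℝ)) * ∑ j, (A j - B j) ^ 2) := by
        rw [hdiff, ← Real.sqrt_mul hc]
    _ ≤ Real.sqrt (1 * μbar ^ 2) := by
        apply Real.sqrt_le_sqrt
        apply mul_le_mul ?_ hsq (Finset.sum_nonneg fun j _ => sq_nonneg _) one_pos.le
        rw [div_le_one hmpos]
        exact_mod_cast hm
    _ = μbar := by rw [one_mul, Real.sqrt_sq hμ.le]
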